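/- For every rational number r > 4 there exist natural numbers ℓ, m, p, q with 2 ≤ ℓ, 4 ≤ m, ℓ < m, m ≤ ℓ + 2, 1 ≤ p, p < q such that, setting n := p*(ℓ−1) + q*(m−1) + 2 and N(L) := Nat.card {(a,b) : ℤ × ℤ | (|a| : ℝ) ≤ L^ℓ ∧ (|b| : ℝ) ≤ L^m ∧ ((|a|^p * |b|^q : ℤ) : ℝ) ≤ L^n}, the function L ↦ Real.log (N(L)) / Real.log L tends to (r : ℝ) as L → ∞ (Filter.Tendsto along Filter.atTop to the neighborhood filter of (r : ℝ)). -/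

import Mathlib

open Filter Real

lemma rpow_step {s : ℝ} (hs0 : 0 ≤ s) (hs1 : s ≤ 1) (A : ℝ) (hA : 0 ≤ A) :
    s * (A+1) ^ (s-1) + A ^ s ≤ (A+1) ^ s := by
  have hy : (0:ℝ) < A + 1 := by linarith
  have amgm := Real.geom_mean_le_arith_mean2_weighted hs0 (by linarith : (0:ℝ) ≤ 1 - s)
    (by positivity : (0:ℝ) ≤ A / (A+1)) zero_le_one (by ring)
  rw [Real.one_rpow, mul_one, mul_one] at amgm
  have h1 : A ^ s = (A / (A+1)) ^ s * (A+1) ^ s := by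
    rw [Real.div_rpow hA hy.le]
    field_simp
  have h2 : (A+1) ^ s = (A+1) ^ (s-1) * (A+1) := by
    rw [← Real.rpow_add_one hy.ne' (s-1)]; ring_nf
  have h3 : (0:ℝ) ≤ (A+1) ^ s := Real.rpow_nonneg hy.le s
  have h4 : A ^ s ≤ (s * (A / (A+1)) + (1 - s)) * (A+1) ^ s := by
    rw [h1]; exact mul_le_mul_of_nonneg_right amgm h3
  have h5 : (s * (A / (A+1)) + (1 - s)) * (A+1) ^ s
      = s * A * (A+1) ^ (s-1) + (1-s) * (A+1) ^ s := by
    rw [h2]; field_simp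
  nlinarith [Real.rpow_nonneg hy.le (s-1)]

lemma sum_pow_le {α : ℝ} (h0 : 0 < α) (h1 : α < 1) (A : ℕ) :
    ∑ i ∈ Finset.range A, ((i:ℝ)+1) ^ (-α) ≤ (A:ℝ) ^ (1-α) / (1-α) := by
  induction A with
  | zero => simp [Real.zero_rpow (by linarith : (1:ℝ)-α ≠ 0)]
  | succ A ih =>
      rw [Finset.sum_range_succ]
      have step := rpow_step (by linarith : (0:ℝ) ≤ 1-α) (by linarith) (A:ℝ) (Nat.cast_nonneg A)
      have : (1:ℝ)-α-1 = -α := by ring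
      rw [this] at step
      have hs : (0:ℝ) < 1 - α := by linarith
      push_cast
      rw [le_div_iff₀ hs] at ih ⊢
      nlinarith

lemma key_lemma (ℓ m p q n : ℕ) (hp : 1 ≤ p) (hpq : p < q)
    (E α β : ℝ) (hα : α = (p:ℝ)/(q:ℝ)) (hβq : β * q = (n:ℝ) - p * ℓ) (hβm : β ≤ (m:ℝ))
    (hβ0 : 0 ≤ β) (hEβ : E = (ℓ:ℝ) + β) (hEm : (m:ℝ) ≤ E)
    (hnq : (n:ℝ)/q + (ℓ:ℝ)*(1-α) = E)
    (L : ℝ) (hL2 : 2 ≤ L) :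
    ({ab : ℤ × ℤ | (|ab.1| : ℝ) ≤ L ^ ℓ ∧ (|ab.2| : ℝ) ≤ L ^ m ∧
        ((|ab.1| ^ p * |ab.2| ^ q : ℤ) : ℝ) ≤ L ^ n}).Finite ∧
    L ^ E ≤ (Nat.card {ab : ℤ × ℤ | (|ab.1| : ℝ) ≤ L ^ ℓ ∧ (|ab.2| : ℝ) ≤ L ^ m ∧
        ((|ab.1| ^ p * |ab.2| ^ q : ℤ) : ℝ) ≤ L ^ n} : ℝ) ∧
    (Nat.card {ab : ℤ × ℤ | (|ab.1| : ℝ) ≤ L ^ ℓ ∧ (|ab.2| : ℝ) ≤ L ^ m ∧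
        ((|ab.1| ^ p * |ab.2| ^ q : ℤ) : ℝ) ≤ L ^ n} : ℝ)
      ≤ (8 + 4*(q:ℝ)/((q:ℝ)-(p:ℝ))) * L ^ E := by
  have hq0 : 0 < q := lt_of_le_of_lt (Nat.zero_le p) hpq
  have hqR : (0:ℝ) < q := by exact_mod_cast hq0
  have hpR : (1:ℝ) ≤ p := by exact_mod_cast hp
  have hpqR : (p:ℝ) < q := by exact_mod_cast hpq
  have hα0 : 0 < α := by rw [hα]; positivity
  have hα1 : α < 1 := by rw [hα]; exact (div_lt_one hqR).2 hpqR
  have hEℓ : (ℓ:ℝ) ≤ E := by rw [hEβ]; linarith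
  have hE0 : (0:ℝ) ≤ E := le_trans (by positivity) hEℓ
  have hL1 : (1:ℝ) ≤ L := by linarith
  have hL0 : (0:ℝ) < L := by linarith
  have hpow : ∀ k : ℕ, L ^ k = L ^ (k:ℝ) := fun k => (Real.rpow_natCast L k).symm
  set S : Set (ℤ × ℤ) := {ab : ℤ × ℤ | (|ab.1| : ℝ) ≤ L ^ ℓ ∧ (|ab.2| : ℝ) ≤ L ^ m ∧
      ((|ab.1| ^ p * |ab.2| ^ q : ℤ) : ℝ) ≤ L ^ n} with hSdef
  set A : ℕ := ⌊L ^ ((ℓ:ℕ):ℝ)⌋₊ with hA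
  have hAle : (A:ℝ) ≤ L ^ ((ℓ:ℕ):ℝ) := Nat.floor_le (by positivity)
  have hAgt : L ^ ((ℓ:ℕ):ℝ) < (A:ℝ) + 1 := Nat.lt_floor_add_one _
  have hLℓ1 : (1:ℝ) ≤ L ^ ((ℓ:ℕ):ℝ) := Real.one_le_rpow hL1 (by positivity)
  set G : ℕ → ℝ := fun j => if j = 0 then L ^ ((m:ℕ):ℝ)
    else (L ^ ((n:ℕ):ℝ) / (j:ℝ) ^ ((p:ℕ):ℝ)) ^ (1/(q:ℝ)) with hG
  have hGnonneg : ∀ j, 0 ≤ G j := by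
    intro j; rw [hG]; dsimp only; split <;> positivity
  set U : Finset (ℤ × ℤ) := (Finset.range (A+1)).biUnion
    (fun j => ({(j:ℤ), -(j:ℤ)} : Finset ℤ) ×ˢ Finset.Icc (-⌊G j⌋) ⌊G j⌋) with hU
  have hSU : S ⊆ ↑U := by
    rintro ⟨a, b⟩ ⟨h1, h2, h3⟩
    simp only at h1 h2 h3
    have haR : ((a.natAbs : ℕ):ℝ) = |(a:ℝ)| := by rw [Nat.cast_natAbs, Int.cast_abs]
    apply Finset.mem_coe.2
    refine Finset.mem_biUnion.2 ⟨a.natAbs, Finset.mem_range.2 ?_, ?_⟩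
    · have hle : ((a.natAbs : ℕ):ℝ) ≤ L ^ ((ℓ:ℕ):ℝ) := by
        rw [haR, ← hpow]; exact h1
      exact Nat.lt_succ_of_le (Nat.le_floor hle)
    · rw [Finset.mem_product]
      constructor
      · rcases Int.natAbs_eq a with h | h
        · exact Finset.mem_insert.2 (Or.inl h)
        · exact Finset.mem_insert.2 (Or.inr (Finset.mem_singleton.2 h))
      · rw [Finset.mem_Icc, ← abs_le]
        apply Int.le_floor.2
        have hbR : ((|b| : ℤ):ℝ) = |(b:ℝ)| := by push_cast; rfl
        rcases eq_or_ne a.natAbs 0 with h0 | h0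
        · rw [hG]; dsimp only; rw [h0, if_pos rfl, hbR, ← hpow]
          exact h2
        · rw [hG]; dsimp only; rw [if_neg h0, hbR]
          have ha1 : (1:ℝ) ≤ |(a:ℝ)| := by
            rw [← haR]; exact_mod_cast Nat.one_le_iff_ne_zero.2 h0
          have h3' : |(a:ℝ)| ^ p * |(b:ℝ)| ^ q ≤ L ^ ((n:ℕ):ℝ) := by
            rw [← hpow]; push_cast at h3; exact h3
          have hbq : |(b:ℝ)| ^ q ≤ L ^ ((n:ℕ):ℝ) / ((a.natAbs:ℕ):ℝ) ^ ((p:ℕ):ℝ) := by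
            rw [le_div_iff₀ (by positivity : (0:ℝ) < ((a.natAbs:ℕ):ℝ) ^ ((p:ℕ):ℝ)),
              Real.rpow_natCast, haR]
            nlinarith [h3', pow_nonneg (abs_nonneg (b:ℝ)) q, pow_nonneg (abs_nonneg (a:ℝ)) p]
          have hb : |(b:ℝ)| = (|(b:ℝ)| ^ q) ^ (1/(q:ℝ)) := by
            rw [← Real.rpow_natCast |(b:ℝ)| q, ← Real.rpow_mul (abs_nonneg _),
              mul_one_div, div_self hqR.ne', Real.rpow_one]
          rw [hb]
          exact Real.rpow_le_rpow (by positivity) hbq (by positivity)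
  have hfin : S.Finite := Set.Finite.subset U.finite_toSet hSU
  clear_value S A G U
  refine ⟨hfin, ?_, ?_⟩
  · -- lower bound
    set Bn : ℕ := ⌊L ^ β⌋₊ with hBn
    have hBle : (Bn:ℝ) ≤ L ^ β := Nat.floor_le (by positivity)
    have hBgt : L ^ β < (Bn:ℝ) + 1 := Nat.lt_floor_add_one _
    set T : Finset (ℤ × ℤ) := Finset.Icc (-(A:ℤ)) A ×ˢ Finset.Icc (-(Bn:ℤ)) Bn with hT
    have hTS : ↑T ⊆ S := by
      rintro ⟨a, b⟩ hab
      rw [Finset.mem_coe, hT, Finset.mem_product, Finset.mem_Icc, Finset.mem_Icc] at hab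
      obtain ⟨⟨ha1, ha2⟩, hb1, hb2⟩ := hab
      have haA : |(a:ℝ)| ≤ (A:ℝ) := by
        have h := abs_le.2 ⟨ha1, ha2⟩
        calc |(a:ℝ)| = ((|a| : ℤ):ℝ) := by push_cast; rfl
        _ ≤ ((A:ℤ):ℝ) := by exact_mod_cast h
        _ = (A:ℝ) := by push_cast; rfl
      have hbB : |(b:ℝ)| ≤ (Bn:ℝ) := by
        have h := abs_le.2 ⟨hb1, hb2⟩
        calc |(b:ℝ)| = ((|b| : ℤ):ℝ) := by push_cast; rfl
        _ ≤ ((Bn:ℤ):ℝ) := by exact_mod_cast h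
        _ = (Bn:ℝ) := by push_cast; rfl
      rw [hSdef]
      simp only [Set.mem_setOf_eq]
      refine ⟨?_, ?_, ?_⟩
      · show |(a:ℝ)| ≤ L ^ ℓ
        rw [hpow]; exact haA.trans hAle
      · show |(b:ℝ)| ≤ L ^ m
        rw [hpow]
        exact hbB.trans (hBle.trans (Real.rpow_le_rpow_of_exponent_le hL1 hβm))
      · show ((|a| ^ p * |b| ^ q : ℤ) : ℝ) ≤ L ^ n
        have hida : |(a:ℝ)| ^ p ≤ (L ^ ((ℓ:ℕ):ℝ)) ^ p :=
          pow_le_pow_left₀ (abs_nonneg _) (haA.trans hAle) p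
        have hidb : |(b:ℝ)| ^ q ≤ (L ^ β) ^ q :=
          pow_le_pow_left₀ (abs_nonneg _) (hbB.trans hBle) q
        have hmul : |(a:ℝ)| ^ p * |(b:ℝ)| ^ q ≤ (L ^ ((ℓ:ℕ):ℝ)) ^ p * (L ^ β) ^ q :=
          mul_le_mul hida hidb (by positivity) (by positivity)
        have hid : (L ^ ((ℓ:ℕ):ℝ)) ^ p * (L ^ β) ^ q = L ^ n := by
          rw [← Real.rpow_natCast (L ^ ((ℓ:ℕ):ℝ)) p, ← Real.rpow_natCast (L ^ β) q,
            ← Real.rpow_mul hL0.le, ← Real.rpow_mul hL0.le, ← Real.rpow_add hL0, hpow n]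
          congr 1
          linarith [hβq]
        push_cast
        calc |(a:ℝ)| ^ p * |(b:ℝ)| ^ q ≤ (L ^ ((ℓ:ℕ):ℝ)) ^ p * (L ^ β) ^ q := hmul
        _ = L ^ n := hid
    have hcardT : T.card = (2*A+1) * (2*Bn+1) := by
      rw [hT, Finset.card_product, Int.card_Icc, Int.card_Icc]
      congr 1 <;> omega
    have hNcard : (2*A+1) * (2*Bn+1) ≤ Nat.card S := by
      calc (2*A+1) * (2*Bn+1) = T.card := hcardT.symm
      _ = (↑T : Set (ℤ × ℤ)).ncard := (Set.ncard_coe_finset T).symm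
      _ ≤ S.ncard := Set.ncard_le_ncard hTS hfin
      _ = Nat.card S := (Nat.card_coe_set_eq _).symm
    have e1 : L ^ ((ℓ:ℕ):ℝ) ≤ 2*(A:ℝ)+1 := by
      have : (0:ℝ) ≤ (A:ℝ) := Nat.cast_nonneg A
      linarith
    have e2 : L ^ β ≤ 2*(Bn:ℝ)+1 := by
      have : (0:ℝ) ≤ (Bn:ℝ) := Nat.cast_nonneg Bn
      linarith
    calc L ^ E = L ^ ((ℓ:ℕ):ℝ) * L ^ β := by
          rw [hEβ, Real.rpow_add hL0]
    _ ≤ (2*(A:ℝ)+1) * (2*(Bn:ℝ)+1) := by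
          apply mul_le_mul e1 e2 (by positivity) (by positivity)
    _ = (((2*A+1) * (2*Bn+1) : ℕ) : ℝ) := by push_cast; ring
    _ ≤ (Nat.card S : ℝ) := by exact_mod_cast hNcard
  · -- upper bound
    have hNU : Nat.card S ≤ U.card := by
      calc Nat.card S = S.ncard := Nat.card_coe_set_eq _
      _ ≤ (↑U : Set (ℤ × ℤ)).ncard := Set.ncard_le_ncard hSU U.finite_toSet
      _ = U.card := Set.ncard_coe_finset U
    have hUstep : (U.card : ℝ) ≤ ∑ j ∈ Finset.range (A+1), (2*(2*(G j)+1)) := by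
      have h1 : U.card ≤ ∑ j ∈ Finset.range (A+1),
          (({(j:ℤ), -(j:ℤ)} : Finset ℤ) ×ˢ Finset.Icc (-⌊G j⌋) ⌊G j⌋).card := by
        rw [hU]; exact Finset.card_biUnion_le
      calc (U.card : ℝ) ≤ ((∑ j ∈ Finset.range (A+1),
          (({(j:ℤ), -(j:ℤ)} : Finset ℤ) ×ˢ Finset.Icc (-⌊G j⌋) ⌊G j⌋).card : ℕ) : ℝ) := by
            exact_mod_cast h1
      _ = ∑ j ∈ Finset.range (A+1),
          ((({(j:ℤ), -(j:ℤ)} : Finset ℤ) ×ˢ Finset.Icc (-⌊G j⌋) ⌊G j⌋).card : ℝ) := by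
            push_cast; ring
      _ ≤ ∑ j ∈ Finset.range (A+1), (2*(2*(G j)+1)) := by
            apply Finset.sum_le_sum
            intro j _
            rw [Finset.card_product]
            have c1 : (({(j:ℤ), -(j:ℤ)} : Finset ℤ).card : ℝ) ≤ 2 := by
              have h2 : ({(j:ℤ), -(j:ℤ)} : Finset ℤ).card ≤ 2 := by
                simpa using Finset.card_insert_le (j:ℤ) ({-(j:ℤ)} : Finset ℤ)
              exact_mod_cast h2
            have hfl0 : (0:ℤ) ≤ ⌊G j⌋ := Int.floor_nonneg.2 (hGnonneg j)
            have c2 : ((Finset.Icc (-⌊G j⌋) ⌊G j⌋).card : ℝ) ≤ 2*(G j)+1 := by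
              have hcard : (Finset.Icc (-⌊G j⌋) ⌊G j⌋).card = (2*⌊G j⌋+1).toNat := by
                rw [Int.card_Icc]; congr 1; ring
              rw [hcard]
              have h4 : (((2*⌊G j⌋+1).toNat : ℕ) : ℝ) = ((2*⌊G j⌋+1 : ℤ) : ℝ) := by
                norm_cast
                omega
              rw [h4]
              push_cast
              have := Int.floor_le (G j)
              linarith
            push_cast
            exact mul_le_mul c1 c2 (by positivity) (by norm_num)
    have hsum_split : ∑ j ∈ Finset.range (A+1), (2*(2*(G j)+1))
        = 4 * (∑ j ∈ Finset.range (A+1), G j) + 2*((A:ℝ)+1) := by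
      have hc : ∀ j ∈ Finset.range (A+1), 2*(2*(G j)+1) = 4 * G j + 2 := by intros; ring
      rw [Finset.sum_congr rfl hc, Finset.sum_add_distrib, ← Finset.mul_sum,
        Finset.sum_const, Finset.card_range]
      push_cast; ring
    have hG0 : G 0 = L ^ ((m:ℕ):ℝ) := by rw [hG]; norm_num
    have hGi : ∀ i : ℕ, G (i+1) = L ^ ((n:ℝ)/q) * (((i:ℝ)+1)) ^ (-α) := by
      intro i
      rw [hG]; dsimp only
      rw [if_neg (Nat.succ_ne_zero i)]
      have hpos : (0:ℝ) < ((i+1:ℕ):ℝ) := by positivity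
      rw [Real.div_rpow (by positivity) (by positivity),
        ← Real.rpow_mul hL0.le, ← Real.rpow_mul hpos.le]
      have e1 : (n:ℝ) * (1/(q:ℝ)) = (n:ℝ)/q := by ring
      have e2 : ((p:ℕ):ℝ) * (1/(q:ℝ)) = α := by rw [hα]; ring
      rw [e1, e2, div_eq_mul_inv, ← Real.rpow_neg hpos.le]
      push_cast
      ring_nf
    have hG0le : G 0 ≤ L ^ E := by
      rw [hG0]; exact Real.rpow_le_rpow_of_exponent_le hL1 hEm
    have hAE : (A:ℝ) + 1 ≤ 2 * L ^ E := by
      have h1 : L ^ ((ℓ:ℕ):ℝ) ≤ L ^ E := Real.rpow_le_rpow_of_exponent_le hL1 hEℓ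
      linarith
    have h1α : (0:ℝ) < 1 - α := by linarith
    have hsum1 : ∑ i ∈ Finset.range A, G (i+1) ≤ L ^ E * ((q:ℝ)/((q:ℝ)-(p:ℝ))) := by
      have e0 : ∑ i ∈ Finset.range A, G (i+1)
          = L ^ ((n:ℝ)/q) * ∑ i ∈ Finset.range A, ((i:ℝ)+1) ^ (-α) := by
        rw [Finset.mul_sum]; exact Finset.sum_congr rfl fun i _ => hGi i
      rw [e0]
      have hW := sum_pow_le hα0 hα1 A
      have e3 : (A:ℝ) ^ (1-α) ≤ (L ^ ((ℓ:ℕ):ℝ)) ^ (1-α) :=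
        Real.rpow_le_rpow (Nat.cast_nonneg A) hAle h1α.le
      have h1mα : 1 - α = ((q:ℝ)-(p:ℝ))/(q:ℝ) := by
        rw [hα, sub_div, div_self hqR.ne']
      calc L ^ ((n:ℝ)/q) * ∑ i ∈ Finset.range A, ((i:ℝ)+1) ^ (-α)
          ≤ L ^ ((n:ℝ)/q) * ((A:ℝ) ^ (1-α) / (1-α)) := by
            apply mul_le_mul_of_nonneg_left hW (by positivity)
      _ ≤ L ^ ((n:ℝ)/q) * ((L ^ ((ℓ:ℕ):ℝ)) ^ (1-α) / (1-α)) := by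
            gcongr
      _ = L ^ E * ((q:ℝ)/((q:ℝ)-(p:ℝ))) := by
            rw [← Real.rpow_mul hL0.le, ← mul_div_assoc, ← Real.rpow_add hL0, hnq,
              div_eq_mul_inv, inv_eq_one_div, h1mα, one_div_div]
    have hNUR : (Nat.card S : ℝ) ≤ (U.card : ℝ) := by exact_mod_cast hNU
    have hsum2 : ∑ j ∈ Finset.range (A+1), G j ≤ L ^ E * ((q:ℝ)/((q:ℝ)-(p:ℝ))) + L ^ E := by
      rw [Finset.sum_range_succ']
      exact add_le_add hsum1 hG0le
    have hfinal : (Nat.card S : ℝ) ≤ (8 + 4*(q:ℝ)/((q:ℝ)-(p:ℝ))) * L ^ E := by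
      have h := hUstep
      rw [hsum_split] at h
      have hexp : (8 + 4*(q:ℝ)/((q:ℝ)-(p:ℝ))) * L ^ E
          = 4 * (L ^ E * ((q:ℝ)/((q:ℝ)-(p:ℝ))) + L ^ E) + 2 * (2 * L ^ E) := by ring
      rw [hexp]
      have := hNUR.trans h
      linarith [hsum2, hAE]
    exact hfinal

lemma main_count (ℓ m p q : ℕ) (hℓ2 : 2 ≤ ℓ) (hm4 : 4 ≤ m) (hp : 1 ≤ p) (hpq : p < q)
    (E : ℝ) (hE : E = (ℓ:ℝ) + (m:ℝ) - 1 + (2 - (p:ℝ))/(q:ℝ)) :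
    Filter.Tendsto (fun L : ℝ =>
        Real.log (Nat.card {ab : ℤ × ℤ | (|ab.1| : ℝ) ≤ L ^ ℓ ∧ (|ab.2| : ℝ) ≤ L ^ m ∧
          ((|ab.1| ^ p * |ab.2| ^ q : ℤ) : ℝ) ≤ L ^ (p * (ℓ - 1) + q * (m - 1) + 2)} : ℝ)
        / Real.log L)
      Filter.atTop (nhds E) := by
  set n : ℕ := p * (ℓ - 1) + q * (m - 1) + 2 with hn
  have hq0 : 0 < q := lt_of_le_of_lt (Nat.zero_le p) hpq
  have hqR : (0:ℝ) < q := by exact_mod_cast hq0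
  have hpR : (1:ℝ) ≤ p := by exact_mod_cast hp
  have hpqR : (p:ℝ) < q := by exact_mod_cast hpq
  set α : ℝ := (p:ℝ) / q with hα
  have hnR : (n:ℝ) = p * ((ℓ:ℝ) - 1) + q * ((m:ℝ) - 1) + 2 := by
    rw [hn]; push_cast [Nat.cast_sub (by omega : 1 ≤ ℓ), Nat.cast_sub (by omega : 1 ≤ m)]; ring
  set β : ℝ := E - ℓ with hβ
  have hℓR : (2:ℝ) ≤ ℓ := by exact_mod_cast hℓ2
  have hmR : (4:ℝ) ≤ m := by exact_mod_cast hm4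
  have hfrac_le : (2 - (p:ℝ))/(q:ℝ) ≤ 1 := by
    rw [div_le_one hqR]; linarith
  have hfrac_ge : (-1:ℝ) ≤ (2 - (p:ℝ))/(q:ℝ) := by
    rw [le_div_iff₀ hqR]; nlinarith
  have hβq : β * q = (n:ℝ) - p * ℓ := by
    rw [hβ, hE, hnR]; field_simp; ring
  have hβm : β ≤ (m:ℝ) := by rw [hβ, hE]; linarith
  have hβ0 : (0:ℝ) ≤ β := by rw [hβ, hE]; linarith
  have hEm : (m:ℝ) ≤ E := by rw [hE]; linarith
  have hEβ : E = (ℓ:ℝ) + β := by rw [hβ]; ring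
  have hE0 : (0:ℝ) ≤ E := by linarith
  have hnq : (n:ℝ)/q + (ℓ:ℝ)*(1-α) = E := by
    rw [hα, hEβ]; field_simp; linarith [hβq]
  set C : ℝ := 8 + 4 * (q:ℝ) / ((q:ℝ) - (p:ℝ)) with hC
  have hCq : (0:ℝ) < (q:ℝ) - p := by linarith
  have hC1 : (1:ℝ) ≤ C := by
    have h9 : 0 ≤ 4 * (q:ℝ) / ((q:ℝ) - p) := by positivity
    rw [hC]; linarith
  have key := fun (L : ℝ) (hL2 : 2 ≤ L) =>
    key_lemma ℓ m p q n hp hpq E α β hα hβq hβm hβ0 hEβ hEm hnq L hL2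
  have hlim0 : Filter.Tendsto (fun L : ℝ => Real.log C / Real.log L) atTop (nhds 0) :=
    tendsto_const_nhds.div_atTop Real.tendsto_log_atTop
  have hlim : Filter.Tendsto (fun L : ℝ => E + Real.log C / Real.log L) atTop (nhds E) := by
    simpa using tendsto_const_nhds.add hlim0
  apply tendsto_of_tendsto_of_tendsto_of_le_of_le'
    (tendsto_const_nhds : Filter.Tendsto (fun _ : ℝ => E) atTop (nhds E)) hlim
  · filter_upwards [eventually_ge_atTop (2:ℝ)] with L hL2
    obtain ⟨hfin, hlow, hup⟩ := key L hL2
    have hL1 : (1:ℝ) ≤ L := by linarith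
    have hL0 : (0:ℝ) < L := by linarith
    have hlogL : 0 < Real.log L := Real.log_pos (by linarith)
    have hLE1 : (1:ℝ) ≤ L ^ E := Real.one_le_rpow hL1 hE0
    have hN1 : (1:ℝ) ≤ (Nat.card {ab : ℤ × ℤ | (|ab.1| : ℝ) ≤ L ^ ℓ ∧ (|ab.2| : ℝ) ≤ L ^ m ∧
        ((|ab.1| ^ p * |ab.2| ^ q : ℤ) : ℝ) ≤ L ^ n} : ℝ) := hLE1.trans hlow
    rw [le_div_iff₀ hlogL]
    calc E * Real.log L = Real.log (L ^ E) := (Real.log_rpow hL0 E).symm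
    _ ≤ _ := Real.log_le_log (by positivity) hlow
  · filter_upwards [eventually_ge_atTop (2:ℝ)] with L hL2
    obtain ⟨hfin, hlow, hup⟩ := key L hL2
    have hL1 : (1:ℝ) ≤ L := by linarith
    have hL0 : (0:ℝ) < L := by linarith
    have hlogL : 0 < Real.log L := Real.log_pos (by linarith)
    have hLE1 : (1:ℝ) ≤ L ^ E := Real.one_le_rpow hL1 hE0
    have hN1 : (1:ℝ) ≤ (Nat.card {ab : ℤ × ℤ | (|ab.1| : ℝ) ≤ L ^ ℓ ∧ (|ab.2| : ℝ) ≤ L ^ m ∧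
        ((|ab.1| ^ p * |ab.2| ^ q : ℤ) : ℝ) ≤ L ^ n} : ℝ) := hLE1.trans hlow
    rw [div_le_iff₀ hlogL]
    calc Real.log _ ≤ Real.log (C * L ^ E) := Real.log_le_log (by linarith) hup
    _ = Real.log C + Real.log (L ^ E) := Real.log_mul (by linarith) (by positivity)
    _ = Real.log C + E * Real.log L := by rw [Real.log_rpow hL0]
    _ = (E + Real.log C / Real.log L) * Real.log L := by field_simp; ring

/-- For every rational `r > 4` there are natural numbers `ℓ, m, p, q` (with
`2 ≤ ℓ`, `4 ≤ m`, `ℓ < m`, `m ≤ ℓ + 2`, `1 ≤ p < q`) such that, with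
`n = p(ℓ-1) + q(m-1) + 2` and `N(L)` the number of integer pairs `(a,b)` with
`|a| ≤ L^ℓ`, `|b| ≤ L^m`, `|a|^p |b|^q ≤ L^n`, we have `log N(L) / log L → r`. -/
theorem stmt_9 (r : ℚ) (hr : 4 < r) :
    ∃ ℓ m p q : ℕ, 2 ≤ ℓ ∧ 4 ≤ m ∧ ℓ < m ∧ m ≤ ℓ + 2 ∧ 1 ≤ p ∧ p < q ∧
      Filter.Tendsto (fun L : ℝ =>
          Real.log (Nat.card {ab : ℤ × ℤ | (|ab.1| : ℝ) ≤ L ^ ℓ ∧ (|ab.2| : ℝ) ≤ L ^ m ∧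
            ((|ab.1| ^ p * |ab.2| ^ q : ℤ) : ℝ) ≤ L ^ (p * (ℓ - 1) + q * (m - 1) + 2)} : ℝ)
          / Real.log L)
        Filter.atTop (nhds (r : ℝ)) := by
  set k : ℤ := ⌈r⌉ with hk
  have hk5 : 5 ≤ k := by
    have h1 : (4:ℚ) < (k:ℚ) := lt_of_lt_of_le hr (Int.le_ceil r)
    have h2 : (4:ℤ) < k := by exact_mod_cast h1
    omega
  set d : ℕ := r.den with hd
  have hd0 : 0 < d := r.pos
  have hdQ : (0:ℚ) < (d:ℚ) := by exact_mod_cast hd0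
  set c : ℤ := k * d - r.num with hc
  have hnum : (r.num:ℚ) = r * (d:ℚ) := by
    conv_lhs => rw [← Rat.num_div_den r]
    rw [Rat.num_div_den]
    field_simp [hd]
    rw [hd]; exact (Rat.mul_den_eq_num r).symm
  have hcQ : (c:ℚ) = ((k:ℚ) - r) * (d:ℚ) := by
    rw [hc]; push_cast; rw [hnum]; ring
  have hc0 : 0 ≤ c := by
    have : (0:ℚ) ≤ (c:ℚ) := by
      rw [hcQ]
      exact mul_nonneg (by linarith [Int.le_ceil r]) hdQ.le
    exact_mod_cast this
  have hcd : c < (d:ℤ) := by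
    have h1 : ((k:ℚ) - r) < 1 := by linarith [Int.ceil_lt_add_one r]
    have : (c:ℚ) < (d:ℚ) := by
      rw [hcQ]
      nlinarith
    exact_mod_cast this
  set K : ℕ := k.toNat with hK
  have hKk : (K:ℤ) = k := Int.toNat_of_nonneg (by omega)
  have hK5 : 5 ≤ K := by omega
  have hrR : (r:ℝ) = (k:ℝ) - (c:ℝ)/(d:ℝ) := by
    have hQ : r = (k:ℚ) - (c:ℚ)/(d:ℚ) := by
      rw [hcQ]
      field_simp
      ring
    exact_mod_cast congrArg (fun x : ℚ => (x:ℝ)) hQ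
  have main : ∀ ℓ m : ℕ, 2 ≤ ℓ → 4 ≤ m → ℓ + m = K + 1 →
      Filter.Tendsto (fun L : ℝ =>
          Real.log (Nat.card {ab : ℤ × ℤ | (|ab.1| : ℝ) ≤ L ^ ℓ ∧ (|ab.2| : ℝ) ≤ L ^ m ∧
            ((|ab.1| ^ (2 + 3*c.toNat) * |ab.2| ^ (3*d) : ℤ) : ℝ)
              ≤ L ^ ((2 + 3*c.toNat) * (ℓ - 1) + (3*d) * (m - 1) + 2)} : ℝ)
          / Real.log L)
        Filter.atTop (nhds (r : ℝ)) := by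
    intro ℓ m hℓ2 hm4 hsum
    apply main_count ℓ m (2 + 3*c.toNat) (3*d) hℓ2 hm4 (by omega) (by omega)
    have hcR : ((c.toNat:ℕ):ℝ) = (c:ℝ) := by exact_mod_cast Int.toNat_of_nonneg hc0
    have hlm : (ℓ:ℝ) + (m:ℝ) = (K:ℝ) + 1 := by exact_mod_cast hsum
    have hKR : (K:ℝ) = (k:ℝ) := by exact_mod_cast hKk
    have hdR : (0:ℝ) < (d:ℝ) := by exact_mod_cast hd0
    have hcRR : (0:ℝ) ≤ (c:ℝ) := by exact_mod_cast hc0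
    rw [hrR]
    push_cast [hcR]
    rw [show (ℓ:ℝ) + (m:ℝ) - 1 = (k:ℝ) by rw [← hKR]; linarith]
    field_simp
    ring
  rcases Nat.even_or_odd K with ⟨t, ht⟩ | ⟨t, ht⟩
  · exact ⟨K/2, K/2 + 1, 2 + 3*c.toNat, 3*d, by omega, by omega, by omega, by omega,
      by omega, by omega, main (K/2) (K/2+1) (by omega) (by omega) (by omega)⟩
  · exact ⟨t, t + 2, 2 + 3*c.toNat, 3*d, by omega, by omega, by omega, by omega,
      by omega, by omega, main t (t+2) (by omega) (by omega) (by omega)⟩
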